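/- Let Z_1, …, Z_k ∈ M_N(ℂ). Let T be the test digraph which is a directed k-cycle with vertices v_0, …, v_{k−1} and, for each j ∈ [k], an edge with source v_{j mod k} and target v_{j−1} labeled Z_j (so that τ_N(T) = tr_N(Z_1 ⋯ Z_k)). For I ⊆ [k], let T_I be the quotient test digraph obtained by identifying, for each j ∈ I, the source and target vertices of the edge labeled Z_j. Then tr_N((Z_1 − Δ_N(Z_1)) ⋯ (Z_k − Δ_N(Z_k))) = Σ_{I ⊆ [k]} (−1)^{#I} τ_N(T_I). -/

import Mathlib

open Filter MeasureTheory Matrix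
open scoped BigOperators Classical

namespace GraphPaper

/-! ### Directed multigraphs (test digraphs) -/

/-- A directed multigraph with vertex type `V` and edge type `E`. -/
structure Digr (V E : Type*) where
  src : E → V
  tgt : E → V

namespace Digr

variable {V E : Type*} (D : Digr V E)

/-- One-step (direction-agnostic) adjacency. -/
def Adj (v w : V) : Prop := ∃ e : E, D.src e = v ∧ D.tgt e = w

/-- The setoid of weakly connected components. -/
def compSetoid : Setoid V := Relation.EqvGen.setoid D.Adj

/-- The weakly connected components. -/
def Components : Type _ := Quotient D.compSetoid

/-- The number of weakly connected components. -/
noncomputable def ncomp : ℕ := Nat.card D.Components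

/-- Weak connectedness. -/
def IsConnected : Prop := Nonempty V ∧ ∀ v w : V, D.compSetoid v w

/-- The digraph with one edge removed. -/
def erase (e₀ : E) : Digr V {e : E // e ≠ e₀} :=
  ⟨fun e => D.src e.1, fun e => D.tgt e.1⟩

/-- `e₀` is a cut edge: removing it increases the number of weakly connected components. -/
def IsCutEdge (e₀ : E) : Prop := D.ncomp < (D.erase e₀).ncomp

/-- Two-edge-connectedness: weakly connected with no cut edge. -/
def IsTwoEdgeConnected : Prop := D.IsConnected ∧ ∀ e : E, ¬ D.IsCutEdge e

/-- A tree (as an undirected multigraph): connected, with no cycles and no parallel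
edges; equivalently, connected and every edge is a cut edge. -/
def IsTree : Prop := D.IsConnected ∧ ∀ e : E, D.IsCutEdge e

/-- Two vertices are related iff they are joined by a path containing no cut edges;
the classes are the two-edge-connected components. -/
def tecSetoid : Setoid V :=
  Relation.EqvGen.setoid (fun v w => ∃ e : E, ¬ D.IsCutEdge e ∧ D.src e = v ∧ D.tgt e = w)

/-- The degree of a two-edge-connected component in the forest `ℱ(D)`:
the number of cut edges incident to it. -/
noncomputable def tecDeg (b : Quotient D.tecSetoid) : ℕ :=
  Nat.card {e : E // D.IsCutEdge e ∧
    (Quotient.mk D.tecSetoid (D.src e) = b ∨ Quotient.mk D.tecSetoid (D.tgt e) = b)}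

/-- `𝔣(D)`: the total number of leaves of the forest `ℱ(D)` of two-edge-connected
components, an isolated vertex counting as two leaves. -/
noncomputable def leafCount : ℕ :=
  ∑ᶠ b : Quotient D.tecSetoid,
    (if D.tecDeg b = 0 then 2 else if D.tecDeg b = 1 then 1 else 0)

/-- The quotient digraph by a partition (setoid) of the vertices. -/
def quotient (s : Setoid V) : Digr (Quotient s) E :=
  ⟨fun e => Quotient.mk s (D.src e), fun e => Quotient.mk s (D.tgt e)⟩

/-- The subgraph retaining only the edges satisfying `p` (all vertices kept). -/
def restrict (p : E → Prop) : Digr V {e : E // p e} :=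
  ⟨fun e => D.src e.1, fun e => D.tgt e.1⟩

/-- The trace of a test digraph with labels `A`. -/
noncomputable def tdTrace {ι : Type*} (A : E → Matrix ι ι ℂ) : ℂ :=
  (1 / (Nat.card ι : ℂ) ^ D.ncomp) *
    ∑ᶠ i : V → ι, ∏ᶠ e : E, A e (i (D.tgt e)) (i (D.src e))

/-- The injective trace of a test digraph with labels `A`. -/
noncomputable def tdTraceInj {ι : Type*} (A : E → Matrix ι ι ℂ) : ℂ :=
  (1 / (Nat.card ι : ℂ) ^ D.ncomp) *
    ∑ᶠ i : V → ι,
      if Function.Injective i then ∏ᶠ e : E, A e (i (D.tgt e)) (i (D.src e)) else 0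

end Digr

/-! ### Colored digraphs, partitions, and the associated auxiliary graphs -/

section Colored

variable {V E S C : Type*}

/-- `ρ_s` : the partition of `V` into weakly connected components of the subgraph of `D`
retaining only edges whose color is not related to the string `s`. -/
def rhoSetoid (D : Digr V E) (χ : E → C) (rel : S → C → Prop) (s : S) : Setoid V :=
  Relation.EqvGen.setoid (fun v w => ∃ e : E, ¬ rel s (χ e) ∧ D.src e = v ∧ D.tgt e = w)

/-- `ω_{π,c} = ⋀_{s ∈ 𝒮_c} π_s`, the common refinement. -/
def omegaSetoid (rel : S → C → Prop) (π : S → Setoid V) (c : C) : Setoid V :=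
  ⨅ s : {s : S // rel s c}, π s.1

/-- `T_{π,c} = (T|_c)/ω_{π,c}`. -/
def Tpc (D : Digr V E) (χ : E → C) (rel : S → C → Prop) (π : S → Setoid V) (c : C) :
    Digr (Quotient (omegaSetoid rel π c)) {e : E // χ e = c} :=
  (D.restrict (fun e => χ e = c)).quotient (omegaSetoid rel π c)

/-- `𝒢_{π,s} = (T|_{𝒞_s})/π_s`. -/
def Gps (D : Digr V E) (χ : E → C) (rel : S → C → Prop) (π : S → Setoid V) (s : S) :
    Digr (Quotient (π s)) {e : E // rel s (χ e)} :=
  (D.restrict (fun e => rel s (χ e))).quotient (π s)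

/-- The map `h_{s,c} : V(T_{π,c}) → V(𝒢_{π,s})`, `[v]_{ω_{π,c}} ↦ [v]_{π_s}`. -/
def hmap (rel : S → C → Prop) (π : S → Setoid V) {s : S} {c : C} (h : rel s c) :
    Quotient (omegaSetoid rel π c) → Quotient (π s) :=
  fun q => Quotient.liftOn q (fun v => Quotient.mk (π s) v)
    (fun a b hab => Quot.sound
      (Setoid.le_def.mp (iInf_le (fun s' : {s' : S // rel s' c} => π s'.1) ⟨s, h⟩) hab))

/-- The vertex set of the graph of colored components `GCC(T,π,s)`. -/
def GCCVert (D : Digr V E) (χ : E → C) (rel : S → C → Prop) (π : S → Setoid V) (s : S) :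
    Type _ :=
  Quotient (π s) ⊕ (Σ c : {c : C // rel s c}, (Tpc D χ rel π c.1).Components)

/-- The edge set of `GCC(T,π,s)`. -/
def GCCEdge (rel : S → C → Prop) (π : S → Setoid V) (s : S) : Type _ :=
  Σ c : {c : C // rel s c}, Quotient (omegaSetoid rel π c.1)

/-- The graph of colored components `GCC(T,π,s)`: the bipartite multigraph with an edge
for each `v ∈ V(T_{π,c})` (`c ∈ 𝒞_s`), joining the component of `T_{π,c}` containing `v`
to `h_{s,c}(v)`. -/
def GCC (D : Digr V E) (χ : E → C) (rel : S → C → Prop) (π : S → Setoid V) (s : S) :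
    Digr (GCCVert D χ rel π s) (GCCEdge rel π s) where
  src := fun p => Sum.inr ⟨p.1, Quotient.mk (Tpc D χ rel π p.1.1).compSetoid p.2⟩
  tgt := fun p => Sum.inl (hmap rel π p.1.2 p.2)

end Colored

/-! ### The matrix model -/

section Model

variable {S C : Type*}

/-- Index set for `⊗_{s ∈ 𝒮} M_N(ℂ)`. -/
abbrev BigIx (S : Type*) (N : ℕ) := S → Fin N

/-- Index set for `⊗_{s ∈ 𝒮_c} M_N(ℂ)`. -/
abbrev ColIx (rel : S → C → Prop) (c : C) (N : ℕ) := {s : S // rel s c} → Fin N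

/-- View a matrix in `⊗_{s ∈ 𝒮_c} M_N(ℂ)` inside `⊗_{s ∈ 𝒮} M_N(ℂ)` by tensoring with
the identity on the remaining factors. -/
noncomputable def embed [Fintype S] (rel : S → C → Prop) (c : C) {N : ℕ}
    (X : Matrix (ColIx rel c N) (ColIx rel c N) ℂ) :
    Matrix (BigIx S N) (BigIx S N) ℂ :=
  Matrix.of fun a b =>
    if (∀ s : S, ¬ rel s c → a s = b s) then X (fun s => a s.1) (fun s => b s.1) else 0

/-- The permutation matrix of a permutation. -/
def permMat {ι : Type*} [DecidableEq ι] (σ : Equiv.Perm ι) : Matrix ι ι ℂ :=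
  Matrix.of fun i j => if σ j = i then 1 else 0

/-- `X̲ = Σ_c^* X Σ_c`, viewed inside `⊗_{s ∈ 𝒮} M_N(ℂ)`. -/
noncomputable def conjEmbed [Fintype S] (rel : S → C → Prop) (c : C) {N : ℕ}
    (σc : Equiv.Perm (ColIx rel c N))
    (X : Matrix (ColIx rel c N) (ColIx rel c N) ℂ) :
    Matrix (BigIx S N) (BigIx S N) ℂ :=
  embed rel c ((permMat σc)ᴴ * X * permMat σc)

/-- `Δ`, the conditional expectation onto the diagonal. -/
def diagPart {ι : Type*} [DecidableEq ι] (M : Matrix ι ι ℂ) : Matrix ι ι ℂ :=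
  Matrix.diagonal fun i => M i i

/-- The normalized `L²`-norm `‖M‖₂ = tr_n(M^*M)^{1/2}`. -/
noncomputable def l2norm {ι : Type*} [Fintype ι] (M : Matrix ι ι ℂ) : ℝ :=
  Real.sqrt ((Matrix.trace (Mᴴ * M) / (Fintype.card ι : ℂ)).re)

/-- The operator norm of a matrix acting on Euclidean space. -/
noncomputable def opNorm {ι : Type*} [Fintype ι] [DecidableEq ι] (M : Matrix ι ι ℂ) : ℝ :=
  ‖Matrix.toEuclideanCLM (𝕜 := ℂ) M‖

/-- The ordered product `f 0 * f 1 * ⋯ * f (k-1)`. -/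
def prodList {M : Type*} [Monoid M] (k : ℕ) (f : Fin k → M) : M :=
  ((List.finRange k).map f).prod

/-- `γ_N(T,π)`. -/
noncomputable def gammaN {V E : Type*} [Fintype S] (rel : S → C → Prop)
    (D : Digr V E) (χ : E → C) (N : ℕ)
    (X : (e : E) → Matrix (ColIx rel (χ e) N) (ColIx rel (χ e) N) ℂ)
    (Λ : V → Matrix (BigIx S N) (BigIx S N) ℂ)
    (π : S → Setoid V)
    (σ : (c : C) → Equiv.Perm (ColIx rel c N)) : ℂ :=
  (1 / (N : ℂ) ^ (Nat.card S)) *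
    ∑ᶠ i : V → BigIx S N,
      if (∀ s : S, Setoid.ker (fun v => i v s) = π s) then
        (∏ᶠ v : V, Λ v (i v) (i v)) *
          ∏ᶠ e : E, (conjEmbed rel (χ e) (σ (χ e)) (X e)) (i (D.tgt e)) (i (D.src e))
      else 0

/-- `λ_N(T,π)`. -/
noncomputable def lambdaN {V : Type*} [Fintype S] (N : ℕ)
    (Λ : V → Matrix (BigIx S N) (BigIx S N) ℂ) (π : S → Setoid V) : ℂ :=
  (1 / (N : ℂ) ^ (∑ᶠ s : S, Nat.card (Quotient (π s)))) *
    ∑ᶠ i : V → BigIx S N,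
      if (∀ s : S, Setoid.ker (fun v => i v s) = π s) then (∏ᶠ v : V, Λ v (i v) (i v))
      else 0

/-- `τ_{N^{#𝒮}}(T̊)`, the trace of the test digraph `T` with a `Λ_v`-labelled self-loop
added at each vertex `v`. -/
noncomputable def ringTrace {V E : Type*} [Fintype S] (rel : S → C → Prop)
    (D : Digr V E) (χ : E → C) (N : ℕ)
    (X : (e : E) → Matrix (ColIx rel (χ e) N) (ColIx rel (χ e) N) ℂ)
    (Λ : V → Matrix (BigIx S N) (BigIx S N) ℂ)
    (σ : (c : C) → Equiv.Perm (ColIx rel c N)) : ℂ :=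
  (1 / (N : ℂ) ^ (Nat.card S)) *
    ∑ᶠ i : V → BigIx S N,
      (∏ᶠ v : V, Λ v (i v) (i v)) *
        ∏ᶠ e : E, (conjEmbed rel (χ e) (σ (χ e)) (X e)) (i (D.tgt e)) (i (D.src e))

/-- Expectation with respect to independent uniformly random permutations, one for each
color: the average over all tuples of permutations. -/
noncomputable def Eperm [Fintype S] (rel : S → C → Prop) (N : ℕ)
    (f : ((c : C) → Equiv.Perm (ColIx rel c N)) → ℂ) : ℂ :=
  (∑ᶠ σ : (c : C) → Equiv.Perm (ColIx rel c N), f σ) /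
    (Nat.card ((c : C) → Equiv.Perm (ColIx rel c N)) : ℂ)

/-- Transport a matrix label along an equality of colors. -/
def castCol (rel : S → C → Prop) {N : ℕ} {c c' : C} (h : c = c')
    (X : Matrix (ColIx rel c N) (ColIx rel c N) ℂ) :
    Matrix (ColIx rel c' N) (ColIx rel c' N) ℂ := h ▸ X

/-- The uniform probability measure on the tuples of permutations (with the discrete
`σ`-algebra). -/
noncomputable def uniformTupleMeasure [Fintype C] [Fintype S] (rel : S → C → Prop) (N : ℕ) :=
  letI : MeasurableSpace ((c : C) → Equiv.Perm (ColIx rel c N)) := ⊤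
  haveI : Nonempty ((c : C) → Equiv.Perm (ColIx rel c N)) := ⟨fun _ => 1⟩
  ((PMF.uniformOfFintype ((c : C) → Equiv.Perm (ColIx rel c N))).toMeasure :
    Measure ((c : C) → Equiv.Perm (ColIx rel c N)))

/-- The tuple `(Σ_c)_{c ∈ 𝒞}` of random permutations is uniformly distributed on the
product (equivalently, the `Σ_c` are independent and each uniform). -/
def hasUniformLaw [Fintype C] [Fintype S] (rel : S → C → Prop) {Ω : Type*}
    [MeasurableSpace Ω] (P : Measure Ω) (N : ℕ)
    (Sp : (c : C) → Ω → Equiv.Perm (ColIx rel c N)) : Prop :=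
  letI : MeasurableSpace ((c : C) → Equiv.Perm (ColIx rel c N)) := ⊤
  Measure.map (fun ω c => Sp c ω) P = uniformTupleMeasure rel N

end Model

/-- A word `χ : [k] → 𝒞` is `𝒢`-reduced. -/
def GReduced {C : Type*} (Edg : C → C → Prop) {k : ℕ} (χ : Fin k → C) : Prop :=
  ∀ i j : Fin k, i < j → χ i = χ j → ∃ l : Fin k, i < l ∧ l < j ∧ ¬ Edg (χ i) (χ l)

/-! ### Sofic groups and graph products of groups -/

/-- The normalized Hamming distance on `S_N`. -/
noncomputable def dHamm {n : ℕ} (σ τ : Equiv.Perm (Fin n)) : ℝ :=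
  ((Finset.univ.filter fun j : Fin n => σ j ≠ τ j).card : ℝ) / n

/-- A group is sofic if it admits an asymptotic homomorphism into permutation groups. -/
def IsSofic (Γ : Type*) [Group Γ] : Prop :=
  ∃ (Nk : ℕ → ℕ) (σ : (k : ℕ) → Γ → Equiv.Perm (Fin (Nk k))),
    Tendsto Nk atTop atTop ∧
    (∀ g h : Γ, Tendsto (fun k => dHamm (σ k g * σ k h) (σ k (g * h))) atTop (nhds 0)) ∧
    (∀ g : Γ, Tendsto (fun k => dHamm (σ k g) 1) atTop
      (nhds (if g = 1 then 0 else 1)))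

/-- The normal subgroup of the free product generated by the commutators of elements of
vertex groups joined by an edge. -/
def graphProductKer {C : Type*} (Edg : C → C → Prop) (G : C → Type*)
    [∀ c, Group (G c)] : Subgroup (Monoid.CoprodI G) :=
  Subgroup.normalClosure
    {x | ∃ (c c' : C) (_ : Edg c c') (g : G c) (g' : G c'),
      x = Monoid.CoprodI.of g * Monoid.CoprodI.of g' *
        (Monoid.CoprodI.of g)⁻¹ * (Monoid.CoprodI.of g')⁻¹}

/-- The graph product of the groups `(G c)_{c ∈ 𝒞}` over the graph with edge relation
`Edg`. -/
def GraphProduct {C : Type*} (Edg : C → C → Prop) (G : C → Type*) [∀ c, Group (G c)] :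
    Type _ :=
  Monoid.CoprodI G ⧸ graphProductKer Edg G

instance graphProductKer_normal {C : Type*} (Edg : C → C → Prop) (G : C → Type*)
    [∀ c, Group (G c)] : (graphProductKer Edg G).Normal :=
  Subgroup.normalClosure_normal

instance {C : Type*} (Edg : C → C → Prop) (G : C → Type*) [∀ c, Group (G c)] :
    Group (GraphProduct Edg G) :=
  QuotientGroup.Quotient.group _

/-- The group element corresponding to a word in the generators and their inverses:
the letter `(j, tt)` is `g_j`, and `(j, ff)` is `g_j⁻¹`. -/
def wordElemG {Γ : Type*} [Group Γ] (g : ℕ → Γ) {m : ℕ} (w : Fin m → ℕ × Bool) : Γ :=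
  prodList m (fun i => if (w i).2 then g (w i).1 else (g (w i).1)⁻¹)

/-- The matrix product corresponding to a word in permutation matrices and their
inverses. -/
noncomputable def wordMat {N m : ℕ} (T : ℕ → Equiv.Perm (Fin N)) (w : Fin m → ℕ × Bool) :
    Matrix (Fin N) (Fin N) ℂ :=
  prodList m (fun i => if (w i).2 then permMat (T (w i).1) else (permMat (T (w i).1))⁻¹)

/-- The directed `k`-cycle: edge `j` has source `v_{(j+1) mod k}` and target `v_j`. -/
def cycleDigr (k : ℕ) : Digr (Fin k) (Fin k) where
  src := fun j => ⟨((j : ℕ) + 1) % k, Nat.mod_lt _ j.pos⟩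
  tgt := fun j => j

/-- The partition of the vertices of the `k`-cycle identifying, for each `j ∈ I`, the
source and the target of the edge `j`. -/
def cycQuotSetoid (k : ℕ) (I : Finset (Fin k)) : Setoid (Fin k) :=
  Relation.EqvGen.setoid
    (fun v w => ∃ j ∈ I, (cycleDigr k).src j = v ∧ (cycleDigr k).tgt j = w)


section Aux

lemma prodList_zero {M : Type*} [Monoid M] (f : Fin 0 → M) : prodList 0 f = 1 := rfl

lemma prodList_succ {M : Type*} [Monoid M] (k : ℕ) (f : Fin (k+1) → M) :
    prodList (k+1) f = f 0 * prodList k (fun j => f j.succ) := by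
  simp [prodList, List.finRange_succ, List.map_map, Function.comp_def]

lemma prodList_apply (N : ℕ) : ∀ (k : ℕ) (W : Fin k → Matrix (Fin N) (Fin N) ℂ) (a b : Fin N),
    prodList k W a b = ∑ i : Fin k → Fin N,
      if (Fin.cons a i : Fin (k+1) → Fin N) (Fin.last k) = b then
        ∏ j : Fin k, W j ((Fin.cons a i : Fin (k+1) → Fin N) (Fin.castSucc j))
          ((Fin.cons a i : Fin (k+1) → Fin N) j.succ)
      else 0 := by
  intro k
  induction k with
  | zero =>
    intro W a b
    rw [prodList_zero]
    rw [Fintype.sum_eq_single (fun x : Fin 0 => x.elim0) (fun i hi => absurd (funext fun x => x.elim0) hi)]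
    simp [Matrix.one_apply, Fin.last]
  | succ k ih =>
    intro W a b
    rw [prodList_succ, Matrix.mul_apply]
    rw [← (Fin.consEquiv (fun _ : Fin (k+1) => Fin N)).sum_comp]
    rw [Fintype.sum_prod_type]
    refine Finset.sum_congr rfl (fun c _ => ?_)
    rw [ih, Finset.mul_sum]
    refine Finset.sum_congr rfl (fun i _ => ?_)
    have hcons : (Fin.consEquiv (fun _ : Fin (k+1) => Fin N)) (c, i) = Fin.cons c i := rfl
    rw [hcons]
    have hlast : (Fin.cons a (Fin.cons c i) : Fin (k+2) → Fin N) (Fin.last (k+1))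
        = (Fin.cons c i : Fin (k+1) → Fin N) (Fin.last k) := by
      rw [← Fin.succ_last, Fin.cons_succ]
    rw [hlast, mul_ite, mul_zero]
    rcases eq_or_ne ((Fin.cons c i : Fin (k+1) → Fin N) (Fin.last k)) b with h | h
    · rw [if_pos h, if_pos h, Fin.prod_univ_succ]
      simp [← Fin.succ_castSucc]
    · rw [if_neg h, if_neg h]


lemma snoc_src (N m : ℕ) (q : Fin (m+1) → Fin N) (j : Fin (m+1)) :
    (Fin.snoc q (q 0) : Fin (m+2) → Fin N) j.succ = q ((cycleDigr (m+1)).src j) := by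
  rcases eq_or_ne j (Fin.last m) with h | h
  · subst h
    rw [Fin.succ_last, Fin.snoc_last]
    congr 1
    ext
    simp [cycleDigr, Fin.last]
  · have hlt : (j : ℕ) + 1 < m + 1 := by
      have := Fin.val_lt_last h
      omega
    have hs : j.succ = Fin.castSucc ⟨(j:ℕ)+1, hlt⟩ := by ext; simp
    rw [hs, Fin.snoc_castSucc]
    congr 1
    ext
    simp [cycleDigr, Nat.mod_eq_of_lt hlt]

lemma trace_prodList_cyclic (N m : ℕ) (W : Fin (m+1) → Matrix (Fin N) (Fin N) ℂ) :
    Matrix.trace (prodList (m+1) W)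
      = ∑ q : Fin (m+1) → Fin N, ∏ j : Fin (m+1), W j (q j) (q ((cycleDigr (m+1)).src j)) := by
  classical
  set G : (Fin (m+2) → Fin N) → ℂ := fun p =>
    if p (Fin.last (m+1)) = p 0 then
      ∏ j : Fin (m+1), W j (p (Fin.castSucc j)) (p j.succ)
    else 0 with hG
  have h1 : Matrix.trace (prodList (m+1) W) = ∑ p : Fin (m+2) → Fin N, G p := by
    rw [Matrix.trace]
    rw [← (Fin.consEquiv (fun _ : Fin (m+2) => Fin N)).sum_comp G, Fintype.sum_prod_type]
    refine Finset.sum_congr rfl (fun a _ => ?_)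
    rw [Matrix.diag, prodList_apply]
    refine Finset.sum_congr rfl (fun i _ => ?_)
    have : (Fin.consEquiv (fun _ : Fin (m+2) => Fin N)) (a, i) = Fin.cons a i := rfl
    rw [this, hG]
    simp only [Fin.cons_zero]
  rw [h1]
  have h2 : ∑ p : Fin (m+2) → Fin N, G p
      = ∑ p ∈ Finset.univ.filter (fun p : Fin (m+2) → Fin N => p (Fin.last (m+1)) = p 0),
          ∏ j : Fin (m+1), W j (p (Fin.castSucc j)) (p j.succ) := by
    rw [Finset.sum_filter]
  rw [h2]
  refine (Finset.sum_bij' (i := fun (q : Fin (m+1) → Fin N) (_ : q ∈ Finset.univ) =>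
      (Fin.snoc q (q 0) : Fin (m+2) → Fin N))
    (j := fun (p : Fin (m+2) → Fin N) (_ : p ∈ Finset.univ.filter
        (fun p : Fin (m+2) → Fin N => p (Fin.last (m+1)) = p 0)) =>
      (fun t : Fin (m+1) => p (Fin.castSucc t)))
    ?_ ?_ ?_ ?_ ?_).symm
  · intro q _
    simp only [Finset.mem_filter, Finset.mem_univ, true_and]
    rw [Fin.snoc_last, ← Fin.castSucc_zero (n := m+1), Fin.snoc_castSucc]
  · intro p _
    exact Finset.mem_univ _
  · intro q _
    funext t
    exact Fin.snoc_castSucc _ _ _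
  · intro p hp
    simp only [Finset.mem_filter, Finset.mem_univ, true_and] at hp
    dsimp only
    funext t
    refine Fin.lastCases ?_ (fun t => ?_) t
    · rw [Fin.snoc_last, Fin.castSucc_zero, ← hp]
    · exact Fin.snoc_castSucc _ _ _
  · intro q _
    refine Finset.prod_congr rfl (fun j _ => ?_)
    rw [Fin.snoc_castSucc, snoc_src]

end Aux


lemma diagPart_apply {ι : Type*} [DecidableEq ι] (M : Matrix ι ι ℂ) (a b : ι) :
    diagPart M a b = if a = b then M a b else 0 := by
  rw [diagPart, Matrix.diagonal_apply]
  split_ifs with h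
  · rw [h]
  · rfl

lemma prod_ite_zero' {α : Type*} (s : Finset α) (c : α → Prop) [DecidablePred c] (f : α → ℂ) :
    (∏ j ∈ s, if c j then f j else 0) = if (∀ j ∈ s, c j) then ∏ j ∈ s, f j else 0 := by
  by_cases h : ∀ j ∈ s, c j
  · rw [if_pos h]
    exact Finset.prod_congr rfl fun j hj => if_pos (h j hj)
  · rw [if_neg h]
    push_neg at h
    obtain ⟨j, hj, hc⟩ := h
    exact Finset.prod_eq_zero hj (if_neg hc)

lemma cyc_eqvgen (m : ℕ) (I : Finset (Fin (m+1))) (a : Fin (m+1)) :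
    Relation.EqvGen ((cycleDigr (m+1)).quotient (cycQuotSetoid (m+1) I)).Adj
      (Quotient.mk (cycQuotSetoid (m+1) I) a) (Quotient.mk (cycQuotSetoid (m+1) I) 0) := by
  induction a using Fin.induction with
  | zero => exact Relation.EqvGen.refl _
  | succ i ih =>
    refine Relation.EqvGen.trans _ _ _ ?_ ih
    refine Relation.EqvGen.rel _ _ ⟨i.castSucc, ?_, rfl⟩
    have hsq : (cycleDigr (m+1)).src i.castSucc = i.succ := by
      ext
      simp [cycleDigr, Nat.mod_eq_of_lt (Nat.succ_lt_succ i.isLt)]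
    show Quotient.mk (cycQuotSetoid (m+1) I) ((cycleDigr (m+1)).src i.castSucc)
        = Quotient.mk (cycQuotSetoid (m+1) I) i.succ
    exact congrArg _ hsq

lemma ncomp_cycle_quot (m : ℕ) (I : Finset (Fin (m+1))) :
    ((cycleDigr (m+1)).quotient (cycQuotSetoid (m+1) I)).ncomp = 1 := by
  rw [Digr.ncomp, Nat.card_eq_one_iff_unique]
  constructor
  · constructor
    intro x y
    refine Quotient.inductionOn₂ x y (fun v w => ?_)
    refine Quotient.sound ?_
    refine Quotient.inductionOn₂ v w (fun a b => ?_)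
    exact Relation.EqvGen.trans _ _ _ (cyc_eqvgen m I a) (Relation.EqvGen.symm _ _ (cyc_eqvgen m I b))
  · exact ⟨Quotient.mk _ (Quotient.mk _ 0)⟩

lemma invariant_iff (N m : ℕ) (I : Finset (Fin (m+1))) (q : Fin (m+1) → Fin N) :
    (∀ a b : Fin (m+1), (cycQuotSetoid (m+1) I).r a b → q a = q b)
      ↔ ∀ j ∈ I, q ((cycleDigr (m+1)).src j) = q j := by
  constructor
  · intro h j hj
    exact h _ _ (Relation.EqvGen.rel _ _ ⟨j, hj, rfl, rfl⟩)
  · intro h a b hab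
    induction hab with
    | rel a b hr => obtain ⟨j, hj, h1, h2⟩ := hr; rw [← h1, ← h2]; exact h j hj
    | refl a => rfl
    | symm a b _ ih => exact ih.symm
    | trans a b c _ _ ih1 ih2 => exact ih1.trans ih2

lemma tdTrace_cycle_quot (N m : ℕ) (I : Finset (Fin (m+1)))
    (Z : Fin (m+1) → Matrix (Fin N) (Fin N) ℂ) :
    ((cycleDigr (m+1)).quotient (cycQuotSetoid (m+1) I)).tdTrace (fun j => Z j)
      = (1 / (N:ℂ)) * ∑ q : Fin (m+1) → Fin N,
          if (∀ j ∈ I, q ((cycleDigr (m+1)).src j) = q j) then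
            ∏ j : Fin (m+1), Z j (q j) (q ((cycleDigr (m+1)).src j))
          else 0 := by
  classical
  rw [Digr.tdTrace, ncomp_cycle_quot]
  rw [finsum_eq_sum_of_fintype]
  congr 1
  · rw [pow_one, Nat.card_eq_fintype_card, Fintype.card_fin]
  rw [← Finset.sum_filter]
  refine (Finset.sum_bij'
    (i := fun (i : Quotient (cycQuotSetoid (m+1) I) → Fin N) (_ : i ∈ Finset.univ) =>
      (fun v : Fin (m+1) => i (Quotient.mk _ v)))
    (j := fun (q : Fin (m+1) → Fin N) (hq : q ∈ Finset.univ.filter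
        (fun q : Fin (m+1) → Fin N => ∀ j ∈ I, q ((cycleDigr (m+1)).src j) = q j)) =>
      Quotient.lift q (by
        have hq' := (Finset.mem_filter.mp hq).2
        exact (invariant_iff N m I q).mpr hq'))
    ?_ ?_ ?_ ?_ ?_)
  · intro i _
    simp only [Finset.mem_filter, Finset.mem_univ, true_and]
    intro j hj
    congr 1
    exact Quotient.sound (Relation.EqvGen.rel _ _ ⟨j, hj, rfl, rfl⟩)
  · intro q _
    exact Finset.mem_univ _
  · intro i _
    funext v
    refine Quotient.inductionOn v (fun a => ?_)
    rfl
  · intro q _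
    funext v
    rfl
  · intro i _
    rw [finprod_eq_prod_of_fintype]
    exact Finset.prod_congr rfl (fun e _ => rfl)

/-- **Lemma (expansion of `tr_N((Z_1 − Δ(Z_1)) ⋯ (Z_k − Δ(Z_k)))` into traces of
quotient test digraphs).** -/
theorem statement4 (N k : ℕ) (hN : 0 < N) (Z : Fin k → Matrix (Fin N) (Fin N) ℂ) :
    Matrix.trace (prodList k (fun j => Z j - diagPart (Z j))) / (N : ℂ)
      = ∑ I : Finset (Fin k), (-1 : ℂ) ^ I.card *
          ((cycleDigr k).quotient (cycQuotSetoid k I)).tdTrace (fun j => Z j) := by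
  classical
  have hNC : (N:ℂ) ≠ 0 := Nat.cast_ne_zero.mpr hN.ne'
  cases k with
  | zero =>
    have hV : IsEmpty (Quotient (cycQuotSetoid 0 (∅ : Finset (Fin 0)))) :=
      ⟨fun v => Quotient.ind (motive := fun _ => False) (fun a => a.elim0) v⟩
    have huniv : (Finset.univ : Finset (Finset (Fin 0))) = {∅} := rfl
    rw [huniv, Finset.sum_singleton]
    rw [prodList_zero, Matrix.trace_one]
    rw [Fintype.card_fin, Finset.card_empty, pow_zero, one_mul]
    rw [div_self hNC]
    rw [Digr.tdTrace]
    have hncomp : ((cycleDigr 0).quotient (cycQuotSetoid 0 ∅)).ncomp = 0 := by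
      rw [Digr.ncomp]
      haveI hCE : IsEmpty ((cycleDigr 0).quotient (cycQuotSetoid 0 ∅)).Components :=
        ⟨fun x => Quotient.ind (motive := fun _ => False) (fun v => hV.false v) x⟩
      exact Nat.card_of_isEmpty
    rw [hncomp, pow_zero]
    rw [finsum_unique, finprod_of_isEmpty]
    norm_num
  | succ m =>
    rw [trace_prodList_cyclic]
    have hent : ∀ q : Fin (m+1) → Fin N,
        (∏ j : Fin (m+1),
            (Z j - diagPart (Z j)) (q j) (q ((cycleDigr (m+1)).src j)))
          = ∑ I : Finset (Fin (m+1)), (-1:ℂ)^I.card *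
              (if ∀ j ∈ I, q j = q ((cycleDigr (m+1)).src j) then
                ∏ j : Fin (m+1), Z j (q j) (q ((cycleDigr (m+1)).src j)) else 0) := by
      intro q
      have hterm : ∀ j : Fin (m+1),
          (Z j - diagPart (Z j)) (q j) (q ((cycleDigr (m+1)).src j))
            = (-(if q j = q ((cycleDigr (m+1)).src j) then
                Z j (q j) (q ((cycleDigr (m+1)).src j)) else 0))
              + Z j (q j) (q ((cycleDigr (m+1)).src j)) := by
        intro j
        rw [Matrix.sub_apply, diagPart_apply]
        ring
      rw [Finset.prod_congr rfl (fun j _ => hterm j), Finset.prod_add, Finset.powerset_univ]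
      refine Finset.sum_congr rfl (fun I _ => ?_)
      rw [show Finset.univ \ I = Iᶜ from (Finset.compl_eq_univ_sdiff I).symm]
      have hsign : (∏ j ∈ I, (-(if q j = q ((cycleDigr (m+1)).src j) then
              Z j (q j) (q ((cycleDigr (m+1)).src j)) else 0)))
          = (-1:ℂ)^I.card * ∏ j ∈ I, (if q j = q ((cycleDigr (m+1)).src j) then
              Z j (q j) (q ((cycleDigr (m+1)).src j)) else 0) := by
        rw [← Finset.prod_const, ← Finset.prod_mul_distrib]
        exact Finset.prod_congr rfl (fun j _ => by ring)
      rw [hsign, prod_ite_zero', mul_assoc]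
      congr 1
      by_cases hC : ∀ j ∈ I, q j = q ((cycleDigr (m+1)).src j)
      · rw [if_pos hC, if_pos hC, Finset.prod_mul_prod_compl]
      · rw [if_neg hC, if_neg hC, zero_mul]
    rw [Finset.sum_congr rfl (fun q _ => hent q), Finset.sum_comm]
    rw [Finset.sum_div]
    refine Finset.sum_congr rfl (fun I _ => ?_)
    rw [tdTrace_cycle_quot, ← Finset.mul_sum]
    have hcond : ∀ q : Fin (m+1) → Fin N,
        (if ∀ j ∈ I, q ((cycleDigr (m+1)).src j) = q j then
            ∏ j : Fin (m+1), Z j (q j) (q ((cycleDigr (m+1)).src j)) else 0)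
          = (if ∀ j ∈ I, q j = q ((cycleDigr (m+1)).src j) then
            ∏ j : Fin (m+1), Z j (q j) (q ((cycleDigr (m+1)).src j)) else 0) := by
      intro q
      refine if_congr ?_ rfl rfl
      exact forall₂_congr (fun j _ => eq_comm)
    rw [Finset.sum_congr rfl (fun q _ => hcond q)]
    field_simp

end GraphPaper
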